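/- Let Z be a real random variable with a density with respect to Lebesgue measure, such that z·P(Z ≥ z) → 0 as z → +∞ and the function z ↦ P(Z ≥ z) is integrable on ℝ. Then for every event A of positive probability and every real x < E_A(Z) (the conditional expectation of Z given A), one has P(A) ≤ (∫_x^∞ P(Z ≥ z) dz) / (E_A(Z) − x). -/

import Mathlib

open MeasureTheory Filter

/-- Lemma 3: let `Z` be a real random variable with a density, such that
`z ↦ z · P(Z ≥ z)` tends to `0` at `+∞` and `z ↦ P(Z ≥ z)` is integrable near `+∞`.
Then for every event `A` of positive probability and every `x < E_A(Z)`,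
`P(A) ≤ (∫_x^∞ P(Z ≥ z) dz) / (E_A(Z) − x)`. -/
theorem amoeba_stmt5 {Ω : Type*} [MeasurableSpace Ω] (μ : Measure Ω)
    [IsProbabilityMeasure μ] (Z : Ω → ℝ) (hZmeas : Measurable Z)
    (hdensity : μ.map Z ≪ (volume : Measure ℝ))
    (hZint : Integrable Z μ)
    (htail : Tendsto (fun z : ℝ => z * (μ {ω | z ≤ Z ω}).toReal) atTop (nhds 0))
    (htailint : ∀ a : ℝ, IntegrableOn (fun z : ℝ => (μ {ω | z ≤ Z ω}).toReal) (Set.Ici a))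
    (A : Set Ω) (hA : MeasurableSet A) (hApos : 0 < μ A)
    (x : ℝ) (hx : x < (μ A).toReal⁻¹ * ∫ ω in A, Z ω ∂μ) :
    (μ A).toReal ≤ (∫ z in Set.Ici x, (μ {ω | z ≤ Z ω}).toReal) /
      ((μ A).toReal⁻¹ * (∫ ω in A, Z ω ∂μ) - x) := by
  set c : ℝ := (μ A).toReal with hc
  set I : ℝ := ∫ ω in A, Z ω ∂μ with hI
  have hcpos : 0 < c := ENNReal.toReal_pos hApos.ne' (measure_ne_top μ A)
  have hpos : 0 < c⁻¹ * I - x := sub_pos.mpr hx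
  rw [le_div_iff₀ hpos]
  -- Reduce to `I - c * x ≤ ∫_{Ici x} tail`
  have hcm : c * (c⁻¹ * I - x) = I - c * x := by
    field_simp
  rw [hcm]
  -- the positive part of Z - x
  set f : Ω → ℝ := fun ω => max (Z ω - x) 0 with hf
  have hfint : Integrable f μ := (hZint.sub (integrable_const x)).pos_part
  have h1 : I - c * x ≤ ∫ ω, f ω ∂μ := by
    have e1 : I - c * x = ∫ ω in A, (Z ω - x) ∂μ := by
      rw [integral_sub (hZint.integrableOn) (integrableOn_const (measure_ne_top μ A))]
      simp [hc, hI, mul_comm, Measure.real]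
    rw [e1]
    have h2 : ∫ ω in A, (Z ω - x) ∂μ ≤ ∫ ω in A, f ω ∂μ :=
      setIntegral_mono_on ((hZint.sub (integrable_const x)).integrableOn)
        hfint.integrableOn hA (fun ω _ => le_max_left _ _)
    refine h2.trans (setIntegral_le_integral hfint ?_)
    exact Eventually.of_forall fun ω => le_max_right _ _
  refine h1.trans ?_
  -- layer cake
  have h3 : ∫ ω, f ω ∂μ = ∫ t in Set.Ioi (0:ℝ), (μ {ω | t ≤ f ω}).toReal :=
    hfint.integral_eq_integral_meas_le (Eventually.of_forall fun ω => le_max_right _ _)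
  have h4 : ∫ t in Set.Ioi (0:ℝ), (μ {ω | t ≤ f ω}).toReal
      = ∫ t in Set.Ioi (0:ℝ), (μ {ω | t + x ≤ Z ω}).toReal := by
    refine setIntegral_congr_fun measurableSet_Ioi fun t ht => ?_
    have : {ω | t ≤ f ω} = {ω | t + x ≤ Z ω} := by
      ext ω
      simp only [hf, Set.mem_setOf_eq, le_max_iff]
      constructor
      · rintro (h | h)
        · linarith
        · exact absurd (lt_of_lt_of_le ht h) (lt_irrefl 0)
      · intro h; left; linarith
    rw [this]
  -- translation
  have h5 : ∫ t in Set.Ioi (0:ℝ), (μ {ω | t + x ≤ Z ω}).toReal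
      = ∫ z in Set.Ioi x, (μ {ω | z ≤ Z ω}).toReal := by
    have := integral_add_right_eq_self
      (μ := (volume : Measure ℝ))
      (fun z => (Set.Ioi x).indicator (fun z => (μ {ω | z ≤ Z ω}).toReal) z) x
    rw [← integral_indicator measurableSet_Ioi, ← integral_indicator measurableSet_Ioi, ← this]
    congr 1
    ext t
    simp only [Set.indicator_apply, Set.mem_Ioi, lt_add_iff_pos_left]
  rw [h3, h4, h5, ← integral_Ici_eq_integral_Ioi]
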